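/- Let m ≥ 1 and let V be a nonempty finite subset of [0,1]^m. Let σ = (σ₁,…,σ_m) be uniformly distributed on {−1,1}^m. Then E[ max_{v∈V} (1/m) ∑_{i=1}^m σ_i v_i ] ≤ √( 2 · log|V| / m ). -/

import Mathlib

/-- A Boolean sign, as a real number in `{−1, 1}`. -/
def signv (b : Bool) : ℝ := if b then 1 else -1

private lemma key (m : ℕ) (hm : 1 ≤ m)
    (V : Finset (Fin m → ℝ)) (hV : V.Nonempty)
    (hV01 : ∀ v ∈ V, ∀ i, v i ∈ Set.Icc (0 : ℝ) 1) (t : ℝ) (ht : 0 < t) :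
    (1 / 2 ^ m : ℝ) * ∑ σ : Fin m → Bool,
        V.sup' hV (fun v => (1 / m : ℝ) * ∑ i, signv (σ i) * v i)
      ≤ Real.log V.card / t + t / (2 * m) := by
  have hm0 : (0:ℝ) < m := by exact_mod_cast hm
  set f : (Fin m → Bool) → (Fin m → ℝ) → ℝ :=
    fun σ v => (1 / m : ℝ) * ∑ i, signv (σ i) * v i with hf
  set A : ℝ := (1 / 2 ^ m : ℝ) * ∑ σ : Fin m → Bool, V.sup' hV (f σ) with hA
  have hP : (0:ℝ) < 2 ^ m := by positivity
  -- Jensen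
  have hw : ∑ _σ : Fin m → Bool, (1 / 2 ^ m : ℝ) = 1 := by
    rw [Finset.sum_const, Finset.card_univ, nsmul_eq_mul]
    rw [show Fintype.card (Fin m → Bool) = 2 ^ m by simp [Fintype.card_fun]]
    push_cast
    field_simp
  have jensen : Real.exp (t * A) ≤
      ∑ σ : Fin m → Bool, (1 / 2 ^ m : ℝ) * Real.exp (t * V.sup' hV (f σ)) := by
    have h := convexOn_exp.map_sum_le (t := Finset.univ)
      (w := fun _σ : Fin m → Bool => (1 / 2 ^ m : ℝ))
      (p := fun σ => t * V.sup' hV (f σ))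
      (fun _ _ => by positivity) hw (fun _ _ => Set.mem_univ _)
    have : t * A = ∑ σ : Fin m → Bool, (1 / 2 ^ m : ℝ) • (t * V.sup' hV (f σ)) := by
      rw [hA, Finset.mul_sum, Finset.mul_sum]
      simp only [smul_eq_mul]
      exact Finset.sum_congr rfl fun σ _ => by ring
    rw [this]
    simpa [smul_eq_mul] using h
  -- exp of sup ≤ sum of exps
  have step2 : ∀ σ : Fin m → Bool,
      Real.exp (t * V.sup' hV (f σ)) ≤ ∑ v ∈ V, Real.exp (t * f σ v) := by
    intro σ
    obtain ⟨v₀, hv₀, hs⟩ := Finset.exists_mem_eq_sup' hV (f σ)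
    rw [hs]
    exact Finset.single_le_sum (f := fun v => Real.exp (t * f σ v))
      (fun v _ => (Real.exp_pos _).le) hv₀
  -- per-v bound
  have step4 : ∀ v ∈ V,
      ∑ σ : Fin m → Bool, Real.exp (t * f σ v) ≤ 2 ^ m * Real.exp (t ^ 2 / (2 * m)) := by
    intro v hv
    have hrw : ∀ σ : Fin m → Bool,
        Real.exp (t * f σ v) = ∏ i, Real.exp ((t / m) * (signv (σ i) * v i)) := by
      intro σ
      rw [← Real.exp_sum]
      congr 1
      rw [hf]
      simp only [← Finset.mul_sum]
      ring
    calc ∑ σ : Fin m → Bool, Real.exp (t * f σ v)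
        = ∑ σ : Fin m → Bool, ∏ i, Real.exp ((t / m) * (signv (σ i) * v i)) := by
          exact Finset.sum_congr rfl (fun σ _ => hrw σ)
      _ = ∏ i, ∑ b : Bool, Real.exp ((t / m) * (signv b * v i)) :=
          (Fintype.prod_sum (fun i b => Real.exp ((t / m) * (signv b * v i)))).symm
      _ ≤ ∏ i : Fin m, 2 * Real.exp (t ^ 2 / (2 * m ^ 2)) := by
          apply Finset.prod_le_prod
          · intro i _; positivity
          · intro i _
            have hvi := hV01 v hv i
            have hvi0 : 0 ≤ v i := hvi.1
            have hvi1 : v i ≤ 1 := hvi.2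
            have : ∑ b : Bool, Real.exp ((t / m) * (signv b * v i))
                = 2 * Real.cosh ((t / m) * v i) := by
              rw [Real.cosh_eq]
              simp [signv]
              ring
            rw [this]
            have h1 : Real.cosh ((t / m) * v i) ≤ Real.exp (((t / m) * v i) ^ 2 / 2) :=
              Real.cosh_le_exp_half_sq _
            have h2 : ((t / m) * v i) ^ 2 / 2 ≤ t ^ 2 / (2 * m ^ 2) := by
              have : ((t / m) * v i) ^ 2 ≤ (t / m) ^ 2 := by
                have habs : |(t / m) * v i| ≤ |t / m| := by
                  rw [abs_mul]
                  nlinarith [abs_nonneg (t / m), abs_of_nonneg hvi0]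
                calc ((t / m) * v i) ^ 2 = |(t / m) * v i| ^ 2 := (sq_abs _).symm
                  _ ≤ |t / m| ^ 2 := by nlinarith [abs_nonneg ((t/m) * v i)]
                  _ = (t / m) ^ 2 := sq_abs _
              have : ((t / m) * v i) ^ 2 / 2 ≤ (t / m) ^ 2 / 2 := by linarith
              calc ((t / m) * v i) ^ 2 / 2 ≤ (t / m) ^ 2 / 2 := this
                _ = t ^ 2 / (2 * m ^ 2) := by field_simp
            calc 2 * Real.cosh ((t / m) * v i)
                ≤ 2 * Real.exp (((t / m) * v i) ^ 2 / 2) := by linarith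
              _ ≤ 2 * Real.exp (t ^ 2 / (2 * m ^ 2)) := by
                  have := Real.exp_le_exp.mpr h2; linarith
      _ = 2 ^ m * Real.exp (t ^ 2 / (2 * m)) := by
          rw [Finset.prod_const, mul_pow, ← Real.exp_nat_mul]
          simp only [Finset.card_univ, Fintype.card_fin]
          congr 1
          field_simp
  -- combine
  have main : Real.exp (t * A) ≤ V.card * Real.exp (t ^ 2 / (2 * m)) := by
    calc Real.exp (t * A)
        ≤ ∑ σ : Fin m → Bool, (1 / 2 ^ m : ℝ) * Real.exp (t * V.sup' hV (f σ)) := jensen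
      _ ≤ ∑ σ : Fin m → Bool, (1 / 2 ^ m : ℝ) * ∑ v ∈ V, Real.exp (t * f σ v) := by
          apply Finset.sum_le_sum
          intro σ _
          exact mul_le_mul_of_nonneg_left (step2 σ) (by positivity)
      _ = ∑ v ∈ V, (1 / 2 ^ m : ℝ) * ∑ σ : Fin m → Bool, Real.exp (t * f σ v) := by
          simp only [Finset.mul_sum]
          exact Finset.sum_comm
      _ ≤ ∑ v ∈ V, (1 / 2 ^ m : ℝ) * (2 ^ m * Real.exp (t ^ 2 / (2 * m))) := by
          apply Finset.sum_le_sum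
          intro v hv
          exact mul_le_mul_of_nonneg_left (step4 v hv) (by positivity)
      _ = V.card * Real.exp (t ^ 2 / (2 * m)) := by
          rw [Finset.sum_const, nsmul_eq_mul]
          field_simp
  -- take logs
  have hN1 : (1:ℝ) ≤ V.card := by exact_mod_cast hV.card_pos
  have hlog : t * A ≤ Real.log V.card + t ^ 2 / (2 * m) := by
    have h := Real.log_le_log (Real.exp_pos _) main
    rw [Real.log_exp] at h
    rwa [Real.log_mul (by linarith) (Real.exp_ne_zero _), Real.log_exp] at h
  have h2m : (0:ℝ) < 2 * m := by positivity
  have h3 := mul_le_mul_of_nonneg_right hlog h2m.le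
  have ht2m : t ^ 2 / (2 * m) * (2 * m) = t * t := by field_simp
  rw [div_add_div _ _ (ne_of_gt ht) (ne_of_gt h2m), le_div_iff₀ (by positivity)]
  calc A * (t * (2 * m)) = (t * A) * (2 * m) := by ring
    _ ≤ (Real.log V.card + t ^ 2 / (2 * m)) * (2 * m) := h3
    _ = Real.log ↑V.card * (2 * ↑m) + t ^ 2 / (2 * m) * (2 * m) := by ring
    _ = Real.log ↑V.card * (2 * ↑m) + t * t := by rw [ht2m]

theorem stmt9 (m : ℕ) (hm : 1 ≤ m)
    (V : Finset (Fin m → ℝ)) (hV : V.Nonempty)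
    (hV01 : ∀ v ∈ V, ∀ i, v i ∈ Set.Icc (0 : ℝ) 1) :
    (1 / 2 ^ m : ℝ) * ∑ σ : Fin m → Bool,
        V.sup' hV (fun v => (1 / m : ℝ) * ∑ i, signv (σ i) * v i)
      ≤ Real.sqrt (2 * Real.log V.card / m) := by
  have hm0 : (0:ℝ) < m := by exact_mod_cast hm
  rcases eq_or_lt_of_le (show 1 ≤ V.card from hV.card_pos) with h1 | h2
  · -- V.card = 1
    have hc : V.card = 1 := h1.symm
    have hlog0 : Real.log (V.card : ℝ) = 0 := by rw [hc]; simp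
    rw [hlog0]
    simp only [mul_zero, zero_mul, zero_div, Real.sqrt_zero]
    apply le_of_forall_pos_le_add
    intro ε hε
    have := key m hm V hV hV01 (2 * m * ε) (by positivity)
    rw [hlog0] at this
    calc (1 / 2 ^ m : ℝ) * ∑ σ : Fin m → Bool,
          V.sup' hV (fun v => (1 / m : ℝ) * ∑ i, signv (σ i) * v i)
        ≤ 0 / (2 * m * ε) + (2 * m * ε) / (2 * m) := this
      _ = ε := by field_simp; ring
      _ = 0 + ε := by ring
  · -- V.card ≥ 2
    have hN : (1:ℝ) < V.card := by exact_mod_cast h2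
    have hlogpos : 0 < Real.log V.card := Real.log_pos hN
    set L := Real.log (V.card : ℝ) with hL
    set t := Real.sqrt (2 * m * L) with htdef
    have ht2 : t ^ 2 = 2 * m * L := Real.sq_sqrt (by positivity)
    have ht : 0 < t := Real.sqrt_pos.mpr (by positivity)
    have hbound := key m hm V hV hV01 t ht
    have heq : L / t + t / (2 * m) = t / m := by
      have : L = t ^ 2 / (2 * m) := by rw [ht2]; field_simp
      rw [this]
      field_simp
      ring
    have hrhs : t / m = Real.sqrt (2 * L / m) := by
      have : (2 * L / m : ℝ) = (t / m) ^ 2 := by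
        rw [div_pow, ht2]
        field_simp
      rw [this, Real.sqrt_sq (by positivity)]
    calc (1 / 2 ^ m : ℝ) * ∑ σ : Fin m → Bool,
          V.sup' hV (fun v => (1 / m : ℝ) * ∑ i, signv (σ i) * v i)
        ≤ L / t + t / (2 * m) := hbound
      _ = t / m := heq
      _ = Real.sqrt (2 * L / m) := hrhs
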